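/- Let (X,d) be a compact metric space, f : X → X continuous, μ an ergodic f-invariant Borel probability measure, and Δ a Borel set with μ(Δ) > 1 - δ/2 for some 0 < δ < 1. Let ξ be a finite Borel partition refining {Δ, X\Δ}, m ∈ ℕ, and define Δ_n = {x ∈ Δ : ∃ l ∈ [n, (1+1/m)n] ∩ ℕ with f^l(x) ∈ ξ(x)}. Then μ(Δ_n) → μ(Δ) as n → ∞; in particular μ(Δ_n) > 1 - δ for all large n. -/

import Mathlib

open Filter MeasureTheory


open Filter MeasureTheory
open scoped ENNReal

/-- Key lemma: for a probability-preserving map, a.e. point of a measurable set `s`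
eventually has a return time to `s` in every window `[n, (1+1/m)n]`. -/
lemma aux_return {X : Type*} [MeasurableSpace X] {f : X → X} {μ : Measure X}
    [IsProbabilityMeasure μ] (hf : MeasurePreserving f μ μ)
    (s : Set X) (hs : MeasurableSet s) (m : ℕ) (hm : 0 < m) :
    ∀ᵐ x ∂μ, x ∈ s → ∀ᶠ n : ℕ in atTop,
      ∃ l : ℕ, n ≤ l ∧ (l : ℝ) ≤ (1 + 1 / (m : ℝ)) * (n : ℝ) ∧ f^[l] x ∈ s := by
  classical
  have hfm : Measurable f := hf.measurable
  set G : ℕ → Set X := fun k => ⋂ j ∈ Finset.range k, f^[j] ⁻¹' sᶜ with hG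
  have hGmeas : ∀ k, MeasurableSet (G k) := fun k =>
    Finset.measurableSet_biInter _ fun j _ => (hfm.iterate j) hs.compl
  set S : ℕ → Set X := fun k => s ∩ f ⁻¹' (G k) with hS
  have hSmeas : ∀ k, MeasurableSet (S k) := fun k => hs.inter (hfm (hGmeas k))
  have hGsucc : ∀ k, G (k + 1) = sᶜ ∩ f ⁻¹' (G k) := by
    intro k
    ext x
    simp only [hG, Set.mem_iInter, Finset.mem_range, Set.mem_inter_iff, Set.mem_preimage,
      Set.mem_compl_iff]
    constructor
    · intro h
      refine ⟨by simpa using h 0 k.succ_pos, fun j hj => ?_⟩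
      have := h (j + 1) (Nat.succ_lt_succ hj)
      rwa [Function.iterate_succ_apply] at this
    · rintro ⟨h0, h⟩ j hj
      cases j with
      | zero => simpa using h0
      | succ i => rw [Function.iterate_succ_apply]; exact h i (Nat.lt_of_succ_lt_succ hj)
  have hrec : ∀ k, f ⁻¹' (G k) = S k ∪ G (k + 1) := by
    intro k
    rw [hGsucc k, hS]
    ext x; by_cases hx : x ∈ s <;> simp [hx]
  have hmeasG : ∀ k, μ (G k) = μ (S k) + μ (G (k + 1)) := by
    intro k
    rw [← hf.measure_preimage (hGmeas k).nullMeasurableSet, hrec k,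
      measure_union ?_ (hGmeas (k + 1))]
    rw [hGsucc k]
    exact Set.disjoint_left.2 fun x hx hx' => hx'.1 hx.1
  have hsum : ∀ K, ∑ k ∈ Finset.range K, μ (S k) + μ (G K) = 1 := by
    intro K
    induction K with
    | zero => simp [hG]
    | succ K ih =>
      rw [Finset.sum_range_succ, add_assoc, ← hmeasG K, ih]
  have htsum : ∑' k, μ (S k) ≤ 1 :=
    ENNReal.tsum_le_of_sum_range_le fun K => le_trans (le_add_right le_rfl) (hsum K).le
  -- bad sets
  set B : ℕ → Set X := fun r => f^[r] ⁻¹' (S (r / m)) with hB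
  haveI : NeZero m := ⟨hm.ne'⟩
  have htsumB : ∑' r, μ (B r) ≤ (m : ℝ≥0∞) := by
    have h1 : ∀ r, μ (B r) = μ (S (r / m)) := fun r =>
      (hf.iterate r).measure_preimage (hSmeas _).nullMeasurableSet
    calc ∑' r, μ (B r) = ∑' r, μ (S (r / m)) := by simp only [h1]
      _ = ∑' p : ℕ × Fin m, μ (S p.1) := (Nat.divModEquiv m).tsum_eq (fun p => μ (S p.1))
      _ = ∑' k, ∑' _i : Fin m, μ (S k) := ENNReal.tsum_prod (f := fun k (_ : Fin m) => μ (S k))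
      _ = ∑' k, (m : ℝ≥0∞) * μ (S k) := by
          simp [tsum_fintype, Finset.sum_const, nsmul_eq_mul]
      _ = (m : ℝ≥0∞) * ∑' k, μ (S k) := ENNReal.tsum_mul_left
      _ ≤ (m : ℝ≥0∞) * 1 := by gcongr
      _ = (m : ℝ≥0∞) := mul_one _
  have hBC : ∀ᵐ x ∂μ, ∀ᶠ r : ℕ in atTop, x ∉ B r :=
    ae_eventually_notMem (ne_top_of_le_ne_top (ENNReal.natCast_ne_top m) htsumB)
  have hPoin : ∀ᵐ x ∂μ, x ∈ s → ∃ᶠ n in atTop, f^[n] x ∈ s :=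
    hf.conservative.ae_mem_imp_frequently_image_mem hs.nullMeasurableSet
  filter_upwards [hBC, hPoin] with x hx1 hx2 hxs
  obtain ⟨R₀, hR₀⟩ := eventually_atTop.1 hx1
  -- key consequence of not being in the bad sets
  have key : ∀ r, R₀ ≤ r → f^[r] x ∈ s → ∃ j < r / m, f^[j + (r + 1)] x ∈ s := by
    intro r hr hrs
    by_contra h
    push_neg at h
    refine hR₀ r hr ?_
    refine ⟨hrs, ?_⟩
    simp only [hG, Set.mem_preimage, Set.mem_iInter, Finset.mem_range, Set.mem_compl_iff]
    intro j hj
    rw [← Function.iterate_succ_apply' f r x, ← Function.iterate_add_apply]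
    exact h j hj
  obtain ⟨r₁, hr₁s, hr₁ge⟩ :=
    ((hx2 hxs).and_eventually (eventually_ge_atTop (max R₀ m + 1))).exists
  refine eventually_atTop.2 ⟨r₁ + 1, fun n hn => ?_⟩
  set Q : ℕ → Prop := fun r => f^[r] x ∈ s ∧ r₁ ≤ r with hQ
  have hr₁n : r₁ ≤ n - 1 := Nat.le_sub_one_of_lt hn
  set r := Nat.findGreatest Q (n - 1) with hr
  have hrQ : Q r := Nat.findGreatest_spec hr₁n ⟨hr₁s, le_rfl⟩
  have hrle : r ≤ n - 1 := Nat.findGreatest_le _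
  have hrmax : ∀ k, r < k → k ≤ n - 1 → ¬Q k := fun k hk hk' =>
    Nat.findGreatest_is_greatest hk hk'
  have hrR₀ : R₀ ≤ r := le_trans (le_trans (le_max_left _ _) (Nat.le_of_succ_le hr₁ge)) hrQ.2
  obtain ⟨j, hjlt, hjs⟩ := key r hrR₀ hrQ.1
  set l := j + (r + 1) with hl
  have hrl : r < l := by omega
  have hnl : n ≤ l := by
    by_contra hcon
    push_neg at hcon
    have hln : l ≤ n - 1 := by omega
    exact hrmax l hrl hln ⟨hjs, le_trans hrQ.2 hrl.le⟩
  refine ⟨l, hnl, ?_, hjs⟩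
  have h1 : (l : ℝ) ≤ (r : ℝ) + ((r / m : ℕ) : ℝ) := by
    have : l ≤ r + r / m := by omega
    calc (l : ℝ) ≤ ((r + r / m : ℕ) : ℝ) := by exact_mod_cast this
      _ = (r : ℝ) + ((r / m : ℕ) : ℝ) := by push_cast; ring
  have h2 : ((r / m : ℕ) : ℝ) ≤ (r : ℝ) / (m : ℝ) := Nat.cast_div_le
  have h3 : (r : ℝ) ≤ (n : ℝ) := by
    have : r ≤ n := le_trans hrle (Nat.sub_le _ _)
    exact_mod_cast this
  have hm' : (0 : ℝ) < (m : ℝ) := by exact_mod_cast hm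
  calc (l : ℝ) ≤ (r : ℝ) + (r : ℝ) / (m : ℝ) := by linarith
    _ = (1 + 1 / (m : ℝ)) * (r : ℝ) := by field_simp
    _ ≤ (1 + 1 / (m : ℝ)) * (n : ℝ) := by
        have : (0 : ℝ) ≤ 1 + 1 / (m : ℝ) := by positivity
        nlinarith


/-- Return times into partition elements: if `μ` is ergodic for `f`, `Δ` has measure
`> 1 - δ/2`, `ξ` (given by the finite family `P` with cell map `cell`) is a finite partition
refining `{Δ, Δᶜ}`, and
`Δ_n = {x ∈ Δ : ∃ l ∈ [n, (1+1/m)n], f^l(x) ∈ ξ(x)}`, then `μ(Δ_n) → μ(Δ)`;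
in particular `μ(Δ_n) > 1 - δ` for all large `n`. -/
theorem measure_of_return_time_sets
    {X : Type*} [MetricSpace X] [CompactSpace X] [MeasurableSpace X] [BorelSpace X]
    (f : X → X) (hf : Continuous f) (μ : Measure X) [IsProbabilityMeasure μ]
    (herg : Ergodic f μ)
    (δ : ℝ) (hδ0 : 0 < δ) (hδ1 : δ < 1)
    (Δ : Set X) (hΔmeas : MeasurableSet Δ)
    (hΔ : ENNReal.ofReal (1 - δ / 2) < μ Δ)
    (m : ℕ) (hm : 0 < m)
    (P : Finset (Set X))
    (hmeas : ∀ s ∈ P, MeasurableSet s)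
    (hdisj : ∀ s ∈ P, ∀ u ∈ P, s ≠ u → Disjoint s u)
    (hcover : ⋃ s ∈ P, s = Set.univ)
    (href : ∀ s ∈ P, s ⊆ Δ ∨ s ⊆ Δᶜ)
    (cell : X → Set X) (hcell : ∀ x, cell x ∈ P ∧ x ∈ cell x) :
    Tendsto (fun n : ℕ =>
        μ {x ∈ Δ | ∃ l : ℕ, n ≤ l ∧ (l : ℝ) ≤ (1 + 1 / (m : ℝ)) * (n : ℝ) ∧
          f^[l] x ∈ cell x}) atTop (nhds (μ Δ)) ∧
    ∀ᶠ n : ℕ in atTop,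
      ENNReal.ofReal (1 - δ) <
        μ {x ∈ Δ | ∃ l : ℕ, n ≤ l ∧ (l : ℝ) ≤ (1 + 1 / (m : ℝ)) * (n : ℝ) ∧
          f^[l] x ∈ cell x} := by
  classical
  have hmp : MeasurePreserving f μ μ := herg.toMeasurePreserving
  have hfm : Measurable f := hmp.measurable
  have hcellEq : ∀ {x : X} {s : Set X}, s ∈ P → x ∈ s → cell x = s := by
    intro x s hsP hxs
    by_contra hne
    exact Set.disjoint_left.1 (hdisj _ (hcell x).1 _ hsP hne) (hcell x).2 hxs
  set D : ℕ → Set X := fun n =>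
    {x ∈ Δ | ∃ l : ℕ, n ≤ l ∧ (l : ℝ) ≤ (1 + 1 / (m : ℝ)) * (n : ℝ) ∧ f^[l] x ∈ cell x}
    with hD
  have hD_eq : ∀ n, D n = Δ ∩
      ⋃ (l : ℕ) (_ : n ≤ l ∧ (l : ℝ) ≤ (1 + 1 / (m : ℝ)) * (n : ℝ)),
        ⋃ s ∈ P, s ∩ f^[l] ⁻¹' s := by
    intro n
    ext x
    simp only [hD, Set.mem_setOf_eq, Set.mem_inter_iff, Set.mem_iUnion, Set.mem_preimage,
      exists_prop]
    constructor
    · rintro ⟨hxΔ, l, h1, h2, h3⟩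
      exact ⟨hxΔ, l, ⟨h1, h2⟩, cell x, (hcell x).1, (hcell x).2, h3⟩
    · rintro ⟨hxΔ, l, ⟨h1, h2⟩, s, hsP, hxs, hfl⟩
      exact ⟨hxΔ, l, h1, h2, by rw [hcellEq hsP hxs]; exact hfl⟩
  have hDmeas : ∀ n, MeasurableSet (D n) := by
    intro n
    rw [hD_eq n]
    refine hΔmeas.inter (MeasurableSet.iUnion fun l => MeasurableSet.iUnion fun _ => ?_)
    exact Finset.measurableSet_biUnion _ fun s hsP =>
      (hmeas s hsP).inter ((hfm.iterate l) (hmeas s hsP))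
  have hDsub : ∀ n, D n ⊆ Δ := fun n x hx => hx.1
  -- a.e. eventual membership
  have hae : ∀ᵐ x ∂μ, x ∈ Δ → ∀ᶠ n in atTop, x ∈ D n := by
    have H : ∀ᵐ x ∂μ, ∀ s ∈ (P : Set (Set X)), x ∈ s → ∀ᶠ n : ℕ in atTop,
        ∃ l : ℕ, n ≤ l ∧ (l : ℝ) ≤ (1 + 1 / (m : ℝ)) * (n : ℝ) ∧ f^[l] x ∈ s := by
      rw [ae_ball_iff P.countable_toSet]
      intro s hsP
      exact aux_return hmp s (hmeas s hsP) m hm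
    filter_upwards [H] with x hx hxΔ
    have h1 := hx (cell x) (Finset.mem_coe.2 (hcell x).1) (hcell x).2
    exact h1.mono fun n ⟨l, ha, hb, hc⟩ => ⟨hxΔ, l, ha, hb, hc⟩
  set E : ℕ → Set X := fun n => ⋂ (k : ℕ) (_ : n ≤ k), D k with hE
  have hEmeas : ∀ n, MeasurableSet (E n) :=
    fun n => MeasurableSet.iInter fun k => MeasurableSet.iInter fun _ => hDmeas k
  have hEsubD : ∀ n, E n ⊆ D n := fun n x hx => by
    simpa using (Set.mem_iInter.1 hx n : x ∈ ⋂ (_ : n ≤ n), D n)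
  set T : ℕ → Set X := fun n => Δ \ E n with hT
  have hTanti : Antitone T := by
    intro a b hab
    refine Set.diff_subset_diff_right ?_
    intro x hx
    exact Set.mem_iInter₂.2 fun k hk => Set.mem_iInter₂.1 hx k (le_trans hab hk)
  have hTlim : Tendsto (μ ∘ T) atTop (nhds (μ (⋂ n, T n))) :=
    tendsto_measure_iInter_atTop
      (fun n => (hΔmeas.diff (hEmeas n)).nullMeasurableSet) hTanti
      ⟨0, measure_ne_top μ _⟩
  have hTnull : μ (⋂ n, T n) = 0 := by
    refine measure_mono_null ?_ (ae_iff.1 hae)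
    intro x hx
    have hx0 := Set.mem_iInter.1 hx 0
    simp only [Set.mem_setOf_eq]
    intro hcon
    obtain ⟨N, hN⟩ := eventually_atTop.1 (hcon hx0.1)
    have : x ∈ E N := Set.mem_iInter₂.2 fun k hk => hN k hk
    exact (Set.mem_iInter.1 hx N).2 this
  rw [hTnull] at hTlim
  have hlow : ∀ n, μ Δ - μ (T n) ≤ μ (D n) := by
    intro n
    rw [tsub_le_iff_right]
    refine le_trans (measure_mono ?_) (measure_union_le _ _)
    intro x hxΔ
    by_cases hxE : x ∈ E n
    · exact Or.inl (hEsubD n hxE)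
    · exact Or.inr ⟨hxΔ, hxE⟩
  have hupp : ∀ n, μ (D n) ≤ μ Δ := fun n => measure_mono (hDsub n)
  have hlowlim : Tendsto (fun n => μ Δ - μ (T n)) atTop (nhds (μ Δ)) := by
    have := ENNReal.Tendsto.sub
      (tendsto_const_nhds : Tendsto (fun _ : ℕ => μ Δ) atTop (nhds (μ Δ))) hTlim
      (Or.inl (measure_ne_top μ Δ))
    simpa using this
  have hmain : Tendsto (fun n => μ (D n)) atTop (nhds (μ Δ)) :=
    tendsto_of_tendsto_of_tendsto_of_le_of_le hlowlim
      (tendsto_const_nhds) hlow hupp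
  refine ⟨hmain, ?_⟩
  have hlt : ENNReal.ofReal (1 - δ) < μ Δ :=
    lt_of_le_of_lt (ENNReal.ofReal_le_ofReal (by linarith)) hΔ
  exact hmain.eventually (lt_mem_nhds hlt)
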